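/- Let R be a commutative ring with two gradings (R,G) and (R,G') that are almost equivalent, meaning there is a ring automorphism φ of R such that for each τ ∈ G' there exists σ ∈ G with φ(R_σ) = R'_τ. If R is an EM-G-graded ring with respect to the first grading, then R is an EM-G'-graded ring with respect to the second. -/

import Mathlib

open Polynomial

/-- `R` (with grading `𝒜`) is an EM-graded ring: every nonzero homogeneous
zero-divisor polynomial in `R[x]` has an annihilating content. -/
def IsEMGGraded {G R : Type*} [CommRing R] (𝒜 : G → AddSubgroup R) : Prop :=
  ∀ f : R[X], f ≠ 0 → (∃ σ : G, ∀ i, f.coeff i ∈ 𝒜 σ) → f ∉ nonZeroDivisors R[X] →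
    ∃ (c : R) (g : R[X]), c ∉ nonZeroDivisors R ∧ g ∈ nonZeroDivisors R[X] ∧ f = C c * g

lemma nzd_equiv {A B : Type*} [CommRing A] [CommRing B] (e : A ≃+* B) (a : A)
    (ha : a ∈ nonZeroDivisors A) : e a ∈ nonZeroDivisors B := by
  rw [mem_nonZeroDivisors_iff_right] at ha ⊢
  intro x hx
  have h1 : e.symm x * a = 0 := by
    have := congrArg e.symm hx
    simpa using this
  have h2 := ha _ h1
  simpa using congrArg e h2

/-- If two gradings `(R,G)` and `(R,G')` are almost equivalent — there is a
ring automorphism `φ` of `R` such that each component of the second grading is the image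
under `φ` of some component of the first — and `R` is EM-`G`-graded for the first grading,
then `R` is EM-`G'`-graded for the second. -/
theorem stmt_10 {G G' R : Type*} [AddGroup G] [AddGroup G'] [DecidableEq G] [DecidableEq G']
    [CommRing R]
    (𝒜 : G → AddSubgroup R) [GradedRing 𝒜]
    (ℬ : G' → AddSubgroup R) [GradedRing ℬ]
    (φ : R ≃+* R)
    (hφ : ∀ τ : G', ∃ σ : G, ∀ x : R, x ∈ ℬ τ ↔ ∃ y ∈ 𝒜 σ, φ y = x)
    (hEM : IsEMGGraded 𝒜) :
    IsEMGGraded ℬ := by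
  intro f hf0 ⟨τ, hτ⟩ hfz
  set f' : R[X] := f.map (φ.symm : R →+* R) with hf'
  have hback : f'.map (φ : R →+* R) = f := by
    rw [map_map]
    simp
  have hf'0 : f' ≠ 0 := by
    intro h
    apply hf0
    rw [← hback, h, Polynomial.map_zero]
  obtain ⟨σ, hσ⟩ := hφ τ
  have hhom : ∃ σ : G, ∀ i, f'.coeff i ∈ 𝒜 σ := by
    refine ⟨σ, fun i => ?_⟩
    obtain ⟨y, hy, hyeq⟩ := (hσ (f.coeff i)).mp (hτ i)
    have : φ.symm (f.coeff i) = y := by rw [← hyeq]; simp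
    rw [coeff_map]
    show φ.symm (f.coeff i) ∈ 𝒜 σ
    rw [this]; exact hy
  have hf'z : f' ∉ nonZeroDivisors R[X] := by
    intro h
    apply hfz
    have := nzd_equiv (Polynomial.mapEquiv (φ : R ≃+* R)) f' h
    simpa [Polynomial.mapEquiv_apply, hback] using this
  obtain ⟨c, g, hc, hg, heq⟩ := hEM f' hf'0 hhom hf'z
  refine ⟨φ c, g.map (φ : R →+* R), ?_, ?_, ?_⟩
  · intro h
    apply hc
    have := nzd_equiv φ.symm (φ c) h
    simpa using this
  · have := nzd_equiv (Polynomial.mapEquiv (φ : R ≃+* R)) g hg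
    simpa [Polynomial.mapEquiv_apply] using this
  · have := congrArg (fun p => p.map (φ : R →+* R)) heq
    simpa [hback, Polynomial.map_mul, map_C] using this
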